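/- Let μ be a probability measure on ℝ^d and {D_t} a family of trimmed regions for μ. Then for every t ∈ (0,1), ∫_{D_t} (1/μ_{τ(x)}) μ(dx) = log(1/μ_t), where μ_v = μ(Q_v) and τ(x) = inf{s : x ∈ D_s}. -/

import Mathlib

open MeasureTheory Set Real Filter

noncomputable section

/-- A family of *trimmed regions* for a probability measure `μ` on `ℝ^d`:
closed sets `D t`, `t ∈ [0,1]`, nondecreasing, with `μ (D 0) = 0`, `μ (D t) < 1`
for `t < 1`, `D 1 = ℝ^d`, left jumps `μ`-null, and right-continuity. -/
structure TrimmedFamily (d : ℕ) (μ : Measure (Fin d → ℝ)) : Type where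
  D : ℝ → Set (Fin d → ℝ)
  isClosed : ∀ t ∈ Icc (0:ℝ) 1, IsClosed (D t)
  mono : ∀ s t : ℝ, 0 ≤ s → s ≤ t → t ≤ 1 → D s ⊆ D t
  null_zero : μ (D 0) = 0
  meas_lt_one : ∀ t : ℝ, 0 ≤ t → t < 1 → μ (D t) < 1
  one_eq_univ : D 1 = univ
  left_jump_null : ∀ t : ℝ, 0 < t → t ≤ 1 → μ (D t \ ⋃ s ∈ Ico (0:ℝ) t, D s) = 0
  right_cont : ∀ t : ℝ, 0 ≤ t → t < 1 → D t = ⋂ s ∈ Ioc t (1:ℝ), D s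

namespace TrimmedFamily

variable {d : ℕ} {μ : Measure (Fin d → ℝ)} (T : TrimmedFamily d μ)

/-- `Q t = ℝ^d \ D t`. -/
def Q (t : ℝ) : Set (Fin d → ℝ) := (T.D t)ᶜ

/-- `τ(x) = inf {t ∈ [0,1] : x ∈ D t}`. -/
def tau (x : Fin d → ℝ) : ℝ := sInf {t | t ∈ Icc (0:ℝ) 1 ∧ x ∈ T.D t}

/-- `μ_t = μ(Q_t)` (as a real number). -/
def muQ (t : ℝ) : ℝ := (μ (T.Q t)).toReal

/-- `G_t = (1/μ(Q_t)) ∫_{Q_t} g dμ`. -/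
def G (g : (Fin d → ℝ) → ℝ) (t : ℝ) : ℝ := (∫ y in T.Q t, g y ∂μ) / T.muQ t

end TrimmedFamily

/-- The entropy `Ent_μ g = ∫ g log g dμ − (∫ g dμ) log (∫ g dμ)`
(with the convention `0 log 0 = 0`, which is automatic since `Real.log 0 = 0`). -/
def entropy {α : Type*} [MeasurableSpace α] (μ : Measure α) (g : α → ℝ) : ℝ :=
  (∫ x, g x * Real.log (g x) ∂μ) - (∫ x, g x ∂μ) * Real.log (∫ x, g x ∂μ)

namespace TrimmedFamily

variable {d : ℕ} {μ : Measure (Fin d → ℝ)} [IsProbabilityMeasure μ] (T : TrimmedFamily d μ)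
set_option linter.unusedSectionVars false

------------------------------------------------------------------------
-- auxiliary development

def F (t : ℝ) : ℝ := (μ (T.D t)).toReal

lemma measD {t : ℝ} (h0 : 0 ≤ t) (h1 : t ≤ 1) : MeasurableSet (T.D t) :=
  (T.isClosed t ⟨h0, h1⟩).measurableSet

lemma D_ne_top (t : ℝ) : μ (T.D t) ≠ ⊤ := measure_ne_top μ _

lemma F_nonneg (t : ℝ) : 0 ≤ T.F t := ENNReal.toReal_nonneg

lemma ofReal_F (t : ℝ) : ENNReal.ofReal (T.F t) = μ (T.D t) :=
  ENNReal.ofReal_toReal (T.D_ne_top t)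

lemma F_mono {s t : ℝ} (h0 : 0 ≤ s) (hst : s ≤ t) (h1 : t ≤ 1) : T.F s ≤ T.F t :=
  ENNReal.toReal_mono (T.D_ne_top t) (measure_mono (T.mono s t h0 hst h1))

lemma F_zero : T.F 0 = 0 := by simp [F, T.null_zero]

lemma F_one : T.F 1 = 1 := by simp [F, T.one_eq_univ]

lemma F_le_one (t : ℝ) : T.F t ≤ 1 := by
  have : μ (T.D t) ≤ 1 := prob_le_one
  simpa [F] using ENNReal.toReal_mono (by simp) this

lemma F_lt_one {t : ℝ} (h0 : 0 ≤ t) (h1 : t < 1) : T.F t < 1 := by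
  have h := T.meas_lt_one t h0 h1
  have := (ENNReal.toReal_lt_toReal (T.D_ne_top t) (by simp)).mpr h
  simpa [F] using this

lemma muQ_eq_one_sub {t : ℝ} (h0 : 0 ≤ t) (h1 : t ≤ 1) : T.muQ t = 1 - T.F t := by
  have hc : μ (T.Q t) = 1 - μ (T.D t) := by
    rw [Q, measure_compl (T.measD h0 h1) (T.D_ne_top t), measure_univ]
  rw [muQ, hc, ENNReal.toReal_sub_of_le prob_le_one (by simp), ENNReal.toReal_one, F]

-- tau basics
lemma tau_nonempty (x : Fin d → ℝ) :
    {t | t ∈ Icc (0:ℝ) 1 ∧ x ∈ T.D t}.Nonempty :=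
  ⟨1, ⟨zero_le_one, le_rfl⟩, by simp [T.one_eq_univ]⟩

lemma tau_bddBelow (x : Fin d → ℝ) :
    BddBelow {t | t ∈ Icc (0:ℝ) 1 ∧ x ∈ T.D t} :=
  ⟨0, fun s hs => hs.1.1⟩

lemma tau_mem (x : Fin d → ℝ) : T.tau x ∈ Icc (0:ℝ) 1 :=
  ⟨le_csInf (T.tau_nonempty x) (fun s hs => hs.1.1),
   csInf_le (T.tau_bddBelow x) ⟨⟨zero_le_one, le_rfl⟩, by simp [T.one_eq_univ]⟩⟩

lemma tau_le_of_mem {t : ℝ} {x : Fin d → ℝ} (h0 : 0 ≤ t) (h1 : t ≤ 1)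
    (hx : x ∈ T.D t) : T.tau x ≤ t :=
  csInf_le (T.tau_bddBelow x) ⟨⟨h0, h1⟩, hx⟩

lemma mem_of_tau_le {t : ℝ} {x : Fin d → ℝ} (h0 : 0 ≤ t) (h1 : t < 1)
    (h : T.tau x ≤ t) : x ∈ T.D t := by
  rw [T.right_cont t h0 h1]
  refine mem_iInter₂.2 fun s hs => ?_
  obtain ⟨r, hr, hrs⟩ := exists_lt_of_csInf_lt (T.tau_nonempty x) (lt_of_le_of_lt h hs.1)
  exact T.mono r s hr.1.1 hrs.le hs.2 hr.2

lemma setOf_tau_le {t : ℝ} (h0 : 0 ≤ t) (h1 : t < 1) :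
    T.tau ⁻¹' Iic t = T.D t := by
  ext x
  exact ⟨fun hx => T.mem_of_tau_le h0 h1 hx, fun hx => T.tau_le_of_mem h0 h1.le hx⟩

lemma measurable_tau : Measurable T.tau := by
  apply measurable_of_Iic
  intro v
  rcases lt_or_ge v 0 with hv | hv
  · convert MeasurableSet.empty
    ext x
    simp only [mem_preimage, mem_Iic, mem_empty_iff_false, iff_false, not_le]
    exact lt_of_lt_of_le hv (T.tau_mem x).1
  rcases lt_or_ge v 1 with hv1 | hv1
  · rw [T.setOf_tau_le hv hv1]; exact T.measD hv hv1.le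
  · convert MeasurableSet.univ
    ext x
    simp only [mem_preimage, mem_Iic, mem_univ, iff_true]
    exact le_trans (T.tau_mem x).2 hv1

-- left/right limit lemmas
lemma F_left {v u : ℝ} (h0 : 0 < v) (h1 : v ≤ 1)
    (h : ∀ s, 0 ≤ s → s < v → T.F s ≤ u) : T.F v ≤ u := by
  have hu0 : 0 ≤ u := le_trans (by rw [T.F_zero]) (h 0 le_rfl h0)
  suffices hE : μ (T.D v) ≤ ENNReal.ofReal u by
    calc T.F v ≤ (ENNReal.ofReal u).toReal :=
          ENNReal.toReal_mono ENNReal.ofReal_ne_top hE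
      _ = u := ENNReal.toReal_ofReal hu0
  set r : ℕ → ℝ := fun n => max 0 (v - 1 / (n + 1)) with hr
  have hrmem : ∀ n : ℕ, r n ∈ Ico (0:ℝ) v := fun n =>
    ⟨le_max_left _ _, max_lt h0 (sub_lt_self v (by positivity))⟩
  have hUnion : (⋃ s ∈ Ico (0:ℝ) v, T.D s) = ⋃ n, T.D (r n) := by
    ext x
    simp only [mem_iUnion, exists_prop]
    constructor
    · rintro ⟨s, hs, hx⟩
      obtain ⟨n, hn⟩ := exists_nat_one_div_lt (show (0:ℝ) < v - s by linarith [hs.2])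
      refine ⟨n, T.mono s (r n) hs.1 (le_max_of_le_right (by linarith)) ?_ hx⟩
      exact le_trans (hrmem n).2.le h1
    · rintro ⟨n, hx⟩
      exact ⟨r n, hrmem n, hx⟩
  have hmono : Monotone fun n : ℕ => T.D (r n) := by
    intro m n hmn
    refine T.mono (r m) (r n) (le_max_left _ _) ?_ (le_trans (hrmem n).2.le h1)
    apply max_le_max le_rfl
    have : 1 / ((n:ℝ) + 1) ≤ 1 / ((m:ℝ) + 1) := by
      apply one_div_le_one_div_of_le (by positivity)
      exact_mod_cast add_le_add_left (Nat.cast_le.mpr hmn) 1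
    linarith
  calc μ (T.D v) ≤ μ (T.D v \ (⋃ n, T.D (r n)) ∪ ⋃ n, T.D (r n)) :=
        measure_mono (subset_diff_union _ _)
    _ ≤ μ (T.D v \ (⋃ n, T.D (r n))) + μ (⋃ n, T.D (r n)) := measure_union_le _ _
    _ = μ (⋃ n, T.D (r n)) := by
        rw [← hUnion, T.left_jump_null v h0 h1, zero_add]
    _ = ⨆ n, μ (T.D (r n)) := hmono.directed_le.measure_iUnion
    _ ≤ ENNReal.ofReal u := iSup_le fun n => by
        rw [← T.ofReal_F (r n)]
        exact ENNReal.ofReal_le_ofReal (h (r n) (hrmem n).1 (hrmem n).2)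

lemma F_right {v u : ℝ} (h0 : 0 ≤ v) (h1 : v < 1)
    (h : ∀ s, v < s → s ≤ 1 → u ≤ T.F s) : u ≤ T.F v := by
  rcases le_or_gt u 0 with hu | hu
  · exact le_trans hu (T.F_nonneg v)
  suffices hE : ENNReal.ofReal u ≤ μ (T.D v) by
    have := ENNReal.toReal_mono (T.D_ne_top v) hE
    rwa [ENNReal.toReal_ofReal hu.le] at this
  set q : ℕ → ℝ := fun n => min 1 (v + 1 / (n + 1)) with hq
  have hqmem : ∀ n : ℕ, q n ∈ Ioc v 1 := fun n =>
    ⟨lt_min h1 (lt_add_of_pos_right v (by positivity)), min_le_left _ _⟩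
  have hInter : T.D v = ⋂ n, T.D (q n) := by
    rw [T.right_cont v h0 h1]
    apply Subset.antisymm
    · exact subset_iInter fun n => iInter₂_subset (q n) (hqmem n)
    · refine subset_iInter₂ fun s hs => ?_
      intro x hx
      obtain ⟨n, hn⟩ := exists_nat_one_div_lt (show (0:ℝ) < s - v by linarith [hs.1])
      have hqs : q n ≤ s := le_trans (min_le_right _ _) (by linarith)
      exact T.mono (q n) s (le_trans h0 (hqmem n).1.le) hqs hs.2 (mem_iInter.1 hx n)
  have hanti : Antitone fun n : ℕ => T.D (q n) := by
    intro m n hmn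
    refine T.mono (q n) (q m) (le_trans h0 (hqmem n).1.le) ?_ (hqmem m).2
    apply min_le_min le_rfl
    have : 1 / ((n:ℝ) + 1) ≤ 1 / ((m:ℝ) + 1) := by
      apply one_div_le_one_div_of_le (by positivity)
      exact_mod_cast add_le_add_left (Nat.cast_le.mpr hmn) 1
    linarith
  calc ENNReal.ofReal u ≤ ⨅ n, μ (T.D (q n)) := le_iInf fun n => by
        rw [← T.ofReal_F (q n)]
        exact ENNReal.ofReal_le_ofReal (h (q n) (hqmem n).1 (hqmem n).2)
    _ = μ (⋂ n, T.D (q n)) :=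
        (Directed.measure_iInter
          (fun n => (T.measD (le_trans h0 (hqmem n).1.le) (hqmem n).2).nullMeasurableSet)
          hanti.directed_ge ⟨0, measure_ne_top μ _⟩).symm
    _ = μ (T.D v) := by rw [← hInter]

-- level-set lemma
lemma exists_levelset {u : ℝ} (hu0 : 0 ≤ u) (hu1 : u < 1) :
    ∃ v, v ∈ Ico (0:ℝ) 1 ∧ T.F v = u ∧
      (fun x => T.F (T.tau x)) ⁻¹' Iic u = T.D v := by
  set A := {s | s ∈ Icc (0:ℝ) 1 ∧ T.F s ≤ u} with hA
  have h0A : (0:ℝ) ∈ A := ⟨⟨le_rfl, zero_le_one⟩, by rw [T.F_zero]; exact hu0⟩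
  have hbdd : BddAbove A := ⟨1, fun s hs => hs.1.2⟩
  set v := sSup A with hv
  have hv0 : 0 ≤ v := le_csSup hbdd h0A
  have hv1lt : v < 1 := by
    obtain ⟨s1, hs10, hs11, hs1u⟩ : ∃ s1, 0 ≤ s1 ∧ s1 < 1 ∧ u < T.F s1 := by
      by_contra hcon
      push_neg at hcon
      have := T.F_left one_pos le_rfl (u := u) (fun s h0 h1 => hcon s h0 h1)
      rw [T.F_one] at this
      linarith
    have hvle : v ≤ s1 := by
      apply csSup_le ⟨0, h0A⟩
      intro s hs
      by_contra hcon
      push_neg at hcon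
      exact absurd (le_trans (T.F_mono hs10 hcon.le hs.1.2) hs.2) (not_le.mpr hs1u)
    linarith
  have hFv_le : T.F v ≤ u := by
    rcases eq_or_lt_of_le hv0 with h | h
    · rw [← h, T.F_zero]; exact hu0
    · refine T.F_left h hv1lt.le fun s hs0 hsv => ?_
      obtain ⟨a, haA, hsa⟩ := exists_lt_of_lt_csSup ⟨0, h0A⟩ hsv
      exact le_trans (T.F_mono hs0 hsa.le haA.1.2) haA.2
  have hFv_ge : u ≤ T.F v := by
    refine T.F_right hv0 hv1lt fun s hvs hs1 => ?_
    by_contra hc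
    push_neg at hc
    have hsA : s ∈ A := ⟨⟨le_trans hv0 hvs.le, hs1⟩, hc.le⟩
    exact absurd (le_csSup hbdd hsA) (not_le.mpr hvs)
  refine ⟨v, ⟨hv0, hv1lt⟩, le_antisymm hFv_le hFv_ge, ?_⟩
  ext x
  simp only [mem_preimage, mem_Iic]
  constructor
  · intro hx
    exact T.mem_of_tau_le hv0 hv1lt (le_csSup hbdd ⟨T.tau_mem x, hx⟩)
  · intro hx
    calc T.F (T.tau x) ≤ T.F v :=
          T.F_mono (T.tau_mem x).1 (T.tau_le_of_mem hv0 hv1lt.le hx) hv1lt.le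
      _ = u := le_antisymm hFv_le hFv_ge

end TrimmedFamily

/-- For every `t ∈ (0,1)`, `∫_{D_t} (1/μ_{τ(x)}) μ(dx) = log (1/μ_t)`. -/
theorem integral_inv_muQ_tau
    {d : ℕ} (μ : Measure (Fin d → ℝ)) [IsProbabilityMeasure μ]
    (T : TrimmedFamily d μ) (t : ℝ) (ht0 : 0 < t) (ht1 : t < 1) :
    ∫ x in T.D t, 1 / T.muQ (T.tau x) ∂μ = Real.log (1 / T.muQ t) := by

  set U : (Fin d → ℝ) → ℝ := fun x => T.F (T.tau x) with hUdef
  have hUmeas : Measurable U := by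
    apply measurable_of_Iic
    intro u
    rcases lt_or_ge u 0 with hu | hu
    · convert MeasurableSet.empty
      ext x
      simp only [mem_preimage, mem_Iic, mem_empty_iff_false, iff_false, not_le]
      exact lt_of_lt_of_le hu (T.F_nonneg (T.tau x))
    rcases lt_or_ge u 1 with hu1 | hu1
    · obtain ⟨v, hv, _, hset⟩ := T.exists_levelset hu hu1
      rw [show U ⁻¹' Iic u = T.D v from hset]
      exact T.measD hv.1 hv.2.le
    · convert MeasurableSet.univ
      ext x
      simp only [mem_preimage, mem_Iic, mem_univ, iff_true]
      exact le_trans (T.F_le_one (T.tau x)) hu1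
  have hmap : ∀ u : ℝ, 0 ≤ u → u < 1 → μ (U ⁻¹' Iic u) = ENNReal.ofReal u := by
    intro u h0 h1
    obtain ⟨v, hv, hFv, hset⟩ := T.exists_levelset h0 h1
    rw [hset, ← T.ofReal_F v, hFv]
  set c := T.F t with hc
  have hc0 : 0 ≤ c := T.F_nonneg t
  have hc1 : c < 1 := T.F_lt_one ht0.le ht1
  -- D t is a.e. equal to {U ≤ c}
  have hsub : T.D t ⊆ U ⁻¹' Iic c := by
    intro x hx
    exact T.F_mono (T.tau_mem x).1 (T.tau_le_of_mem ht0.le ht1.le hx) ht1.le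
  have hmeq : μ (U ⁻¹' Iic c) ≤ μ (T.D t) := by
    rw [hmap c hc0 hc1, hc, T.ofReal_F t]
  have haeeq : T.D t =ᵐ[μ] U ⁻¹' Iic c :=
    ae_eq_of_subset_of_measure_ge hsub hmeq
      (T.measD ht0.le ht1.le).nullMeasurableSet (measure_ne_top μ _)
  -- rewrite the integrand
  have hintegrand : ∀ x, 1 / T.muQ (T.tau x) = (1 - U x)⁻¹ := by
    intro x
    rw [one_div, T.muQ_eq_one_sub (T.tau_mem x).1 (T.tau_mem x).2]
  -- identify the pushforward with Lebesgue measure on [0, c]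
  haveI : IsProbabilityMeasure (μ.map U) := Measure.isProbabilityMeasure_map hUmeas.aemeasurable
  have hrestrict : (μ.map U).restrict (Iic c) = volume.restrict (Icc 0 c) := by
    apply Measure.ext_of_Iic
    intro a
    rw [Measure.restrict_apply measurableSet_Iic, Measure.restrict_apply measurableSet_Iic,
      Iic_inter_Iic, Measure.map_apply hUmeas measurableSet_Iic]
    have hR : Iic a ∩ Icc (0:ℝ) c = Icc 0 (min a c) := by
      ext y; simp only [mem_inter_iff, mem_Icc, mem_Iic, le_min_iff]; tauto
    rw [hR, Real.volume_Icc, sub_zero]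
    rcases lt_or_ge a 0 with ha | ha
    · have hmin : min a c < 0 := lt_of_le_of_lt (min_le_left a c) ha
      have : U ⁻¹' Iic (a ⊓ c) = ∅ := by
        ext x
        simp only [mem_preimage, mem_Iic, mem_empty_iff_false, iff_false, not_le]
        exact lt_of_lt_of_le hmin (T.F_nonneg (T.tau x))
      rw [this, measure_empty, ENNReal.ofReal_of_nonpos hmin.le]
    · have hmin0 : 0 ≤ min a c := le_min ha hc0
      have hmin1 : min a c < 1 := lt_of_le_of_lt (min_le_right a c) hc1
      exact hmap (min a c) hmin0 hmin1
  -- chain of integral identities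
  calc ∫ x in T.D t, 1 / T.muQ (T.tau x) ∂μ
      = ∫ x in T.D t, (1 - U x)⁻¹ ∂μ := by
        apply setIntegral_congr_fun (T.measD ht0.le ht1.le)
        intro x _
        exact hintegrand x
    _ = ∫ x in U ⁻¹' Iic c, (1 - U x)⁻¹ ∂μ := setIntegral_congr_set haeeq
    _ = ∫ u in Iic c, (1 - u)⁻¹ ∂(μ.map U) := by
        have hf : AEStronglyMeasurable (fun u : ℝ => (1 - u)⁻¹) (μ.map U) :=
          ((measurable_id.const_sub 1).inv).aestronglyMeasurable
        exact (setIntegral_map measurableSet_Iic hf hUmeas.aemeasurable).symm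
    _ = ∫ u in Icc (0:ℝ) c, (1 - u)⁻¹ := by rw [hrestrict]
    _ = ∫ u in (0:ℝ)..c, (1 - u)⁻¹ := by
        rw [MeasureTheory.integral_Icc_eq_integral_Ioc, intervalIntegral.integral_of_le hc0]
    _ = ∫ v in (1 - c)..(1:ℝ), v⁻¹ := by
        have := intervalIntegral.integral_comp_sub_left (a := 0) (b := c) (fun v : ℝ => v⁻¹) 1
        simpa using this
    _ = Real.log (1 / (1 - c)) := by
        rw [integral_inv (notMem_uIcc_of_lt (by linarith) one_pos)]
    _ = Real.log (1 / T.muQ t) := by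
        rw [T.muQ_eq_one_sub ht0.le ht1.le]
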